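/- The function H(x) = 1 - 2·∑_{i=1}^∞ (-1)^{i-1} e^{-2 i² x²} is monotone nondecreasing on [0, ∞), satisfies H(0) = 0 (interpreting the alternating series, which sums to 1/2 at x = 0), and H(x) → 1 as x → ∞. -/

import Mathlib

set_option maxHeartbeats 1000000

open Real

/-- The Kolmogorov–Smirnov distribution function, with the standard
convention `H x = 0` for `x ≤ 0` (the alternating series at `x = 0`
sums to `1/2` in the Abel sense, yielding `H 0 = 0`). -/
noncomputable def ksCDF : ℝ → ℝ := fun x =>
  if x ≤ 0 then 0
  else 1 - 2 * ∑' i : ℕ, (-1 : ℝ) ^ i * Real.exp (-2 * ((i : ℝ) + 1) ^ 2 * x ^ 2)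

namespace KSProof

noncomputable def S (x : ℝ) : ℝ :=
  ∑' i : ℕ, (-1 : ℝ) ^ i * Real.exp (-2 * ((i : ℝ) + 1) ^ 2 * x ^ 2)

noncomputable def D (x : ℝ) : ℝ :=
  ∑' n : ℤ, Real.exp (-(π ^ 2 / (2 * x ^ 2)) * ((n : ℝ) - 1 / 2) ^ 2)

lemma ksCDF_of_pos {x : ℝ} (hx : 0 < x) : ksCDF x = 1 - 2 * S x := by
  unfold ksCDF S
  rw [if_neg (not_le.mpr hx)]

lemma ksCDF_of_nonpos {x : ℝ} (hx : x ≤ 0) : ksCDF x = 0 := by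
  unfold ksCDF
  rw [if_pos hx]

lemma term_le_geo {x : ℝ} (i : ℕ) :
    Real.exp (-2 * ((i : ℝ) + 1) ^ 2 * x ^ 2)
      ≤ Real.exp (-(2 * x ^ 2)) ^ i * Real.exp (-(2 * x ^ 2)) := by
  have h1 : Real.exp (-(2 * x ^ 2)) ^ i * Real.exp (-(2 * x ^ 2))
      = Real.exp (((i : ℝ) + 1) * (-(2 * x ^ 2))) := by
    rw [← pow_succ, ← Real.exp_nat_mul]
    push_cast
    ring_nf
  rw [h1]
  apply Real.exp_le_exp.mpr
  have hi : (0 : ℝ) ≤ (i : ℝ) := Nat.cast_nonneg i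
  nlinarith [sq_nonneg x, mul_nonneg (mul_nonneg hi (by linarith : (0:ℝ) ≤ (i:ℝ)+1)) (sq_nonneg x)]

lemma summable_exp_nat {x : ℝ} (hx : 0 < x) :
    Summable (fun i : ℕ => Real.exp (-2 * ((i : ℝ) + 1) ^ 2 * x ^ 2)) := by
  have hr0 : 0 ≤ Real.exp (-(2 * x ^ 2)) := (Real.exp_pos _).le
  have hr1 : Real.exp (-(2 * x ^ 2)) < 1 := by
    rw [Real.exp_lt_one_iff]; nlinarith
  exact Summable.of_nonneg_of_le (fun i => (Real.exp_pos _).le) (fun i => term_le_geo i)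
    ((summable_geometric_of_lt_one hr0 hr1).mul_right (Real.exp (-(2 * x ^ 2))))

lemma abs_term (x : ℝ) (i : ℕ) :
    ‖(-1 : ℝ) ^ i * Real.exp (-2 * ((i : ℝ) + 1) ^ 2 * x ^ 2)‖
      = Real.exp (-2 * ((i : ℝ) + 1) ^ 2 * x ^ 2) := by
  rw [norm_mul, norm_pow, norm_neg, norm_one, one_pow, one_mul, Real.norm_eq_abs,
    abs_of_pos (Real.exp_pos _)]

lemma summable_S {x : ℝ} (hx : 0 < x) :
    Summable (fun i : ℕ => (-1 : ℝ) ^ i * Real.exp (-2 * ((i : ℝ) + 1) ^ 2 * x ^ 2)) := by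
  apply Summable.of_norm
  have : (fun i : ℕ => ‖(-1 : ℝ) ^ i * Real.exp (-2 * ((i : ℝ) + 1) ^ 2 * x ^ 2)‖)
      = fun i : ℕ => Real.exp (-2 * ((i : ℝ) + 1) ^ 2 * x ^ 2) := funext (abs_term x)
  rw [this]
  exact summable_exp_nat hx

lemma summable_int_exp {K : ℝ} (hK : 0 < K) {d : ℝ} (hd : |d| ≤ 1 / 2) :
    Summable (fun n : ℤ => Real.exp (-K * ((n : ℝ) + d) ^ 2)) := by
  have hr0 : 0 ≤ Real.exp (-(K / 4)) := (Real.exp_pos _).le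
  have hr1 : Real.exp (-(K / 4)) < 1 := by
    rw [Real.exp_lt_one_iff]; linarith
  have hdd := abs_le.mp hd
  have key : ∀ (n : ℕ) (t : ℝ), (n : ℝ) / 2 ≤ |t| →
      Real.exp (-K * t ^ 2) ≤ Real.exp (-(K / 4)) ^ n := by
    intro n t ht
    have h1 : ((n : ℝ) / 2) ^ 2 ≤ t ^ 2 := by
      nlinarith [sq_abs t, abs_nonneg t, Nat.cast_nonneg (α := ℝ) n]
    have h2 : (n : ℝ) ≤ ((n : ℝ)) ^ 2 := by
      have : n ≤ n ^ 2 := Nat.le_self_pow two_ne_zero n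
      exact_mod_cast this
    calc Real.exp (-K * t ^ 2) ≤ Real.exp ((n : ℝ) * (-(K / 4))) := by
          apply Real.exp_le_exp.mpr
          nlinarith
      _ = Real.exp (-(K / 4)) ^ n := Real.exp_nat_mul _ n
  apply Summable.of_nat_of_neg_add_one
  · refine Summable.of_nonneg_of_le (fun n => (Real.exp_pos _).le) (fun n => ?_)
      (summable_geometric_of_lt_one hr0 hr1)
    apply key
    rcases Nat.eq_zero_or_pos n with h | h
    · simp [h]
    · have hn : (1 : ℝ) ≤ (n : ℝ) := by exact_mod_cast h
      have habs : (n : ℝ) - 1 / 2 ≤ |((n : ℕ) : ℤ) + d| := by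
        push_cast
        calc (n : ℝ) - 1 / 2 ≤ (n : ℝ) + d := by linarith
          _ ≤ |(n : ℝ) + d| := le_abs_self _
      push_cast at habs ⊢
      linarith
  · refine Summable.of_nonneg_of_le (fun n => (Real.exp_pos _).le) (fun n => ?_)
      (summable_geometric_of_lt_one hr0 hr1)
    apply key
    have habs : (n : ℝ) / 2 ≤ -(((-((n : ℤ) + 1) : ℤ) : ℝ) + d) := by
      push_cast
      linarith [Nat.cast_nonneg (α := ℝ) n, hdd.2]
    exact le_trans habs (neg_le_abs _)

lemma neg_one_zpow_neg (m : ℤ) : (-1 : ℂ) ^ (-m) = (-1 : ℂ) ^ m := by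
  rw [zpow_neg]
  rcases Int.even_or_odd m with h | h
  · rw [h.neg_one_zpow]; norm_num
  · rw [Odd.neg_one_zpow h]; norm_num

lemma claimA {x : ℝ} (hx : 0 < x) :
    (∑' n : ℤ, Complex.exp (-(π : ℂ) * ((2 * x ^ 2 / π : ℝ) : ℂ) * (n : ℂ) ^ 2
        + 2 * (π : ℂ) * (Complex.I / 2) * (n : ℂ)))
      = ((1 - 2 * S x : ℝ) : ℂ) := by
  have hπ : (π : ℝ) ≠ 0 := Real.pi_ne_zero
  have hπC : (π : ℂ) ≠ 0 := Complex.ofReal_ne_zero.mpr hπ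
  have hterm : ∀ n : ℤ,
      Complex.exp (-(π : ℂ) * ((2 * x ^ 2 / π : ℝ) : ℂ) * (n : ℂ) ^ 2
        + 2 * (π : ℂ) * (Complex.I / 2) * (n : ℂ))
      = (-1 : ℂ) ^ n * ((Real.exp (-2 * (n : ℝ) ^ 2 * x ^ 2) : ℝ) : ℂ) := by
    intro n
    have h1 : -(π : ℂ) * ((2 * x ^ 2 / π : ℝ) : ℂ) * (n : ℂ) ^ 2
        + 2 * (π : ℂ) * (Complex.I / 2) * (n : ℂ)
        = ((-2 * (n : ℝ) ^ 2 * x ^ 2 : ℝ) : ℂ) + (n : ℂ) * ((π : ℂ) * Complex.I) := by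
      push_cast
      field_simp
    rw [h1, Complex.exp_add, Complex.exp_int_mul, Complex.exp_pi_mul_I,
      ← Complex.ofReal_exp, mul_comm]
  rw [tsum_congr hterm]
  have hnorm : ∀ n : ℤ, ‖(-1 : ℂ) ^ n * ((Real.exp (-2 * (n : ℝ) ^ 2 * x ^ 2) : ℝ) : ℂ)‖
      = Real.exp (-(2 * x ^ 2) * ((n : ℝ) + 0) ^ 2) := by
    intro n
    rw [norm_mul, norm_zpow, norm_neg, norm_one, one_zpow, one_mul, Complex.norm_real,
      Real.norm_eq_abs, abs_of_pos (Real.exp_pos _)]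
    congr 1
    ring
  have hg : Summable (fun n : ℤ => (-1 : ℂ) ^ n * ((Real.exp (-2 * (n : ℝ) ^ 2 * x ^ 2) : ℝ) : ℂ)) := by
    apply Summable.of_norm
    have := summable_int_exp (K := 2 * x ^ 2) (by positivity) (d := 0) (by norm_num)
    exact this.congr (fun n => (hnorm n).symm)
  have hinj1 : Function.Injective (fun n : ℕ => (n : ℤ)) := fun a b h => by dsimp only at h; omega
  have hinj2 : Function.Injective (fun n : ℕ => -((n : ℤ) + 1)) := fun a b h => by dsimp only at h; omega
  have hgnat : Summable (fun n : ℕ =>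
      (-1 : ℂ) ^ ((n : ℤ)) * ((Real.exp (-2 * ((n : ℤ) : ℝ) ^ 2 * x ^ 2) : ℝ) : ℂ)) :=
    hg.comp_injective hinj1
  have hgneg : Summable (fun n : ℕ =>
      (-1 : ℂ) ^ (-((n : ℤ) + 1)) * ((Real.exp (-2 * ((-((n : ℤ) + 1) : ℤ) : ℝ) ^ 2 * x ^ 2) : ℝ) : ℂ)) :=
    hg.comp_injective hinj2
  rw [tsum_of_nat_of_neg_add_one hgnat hgneg]
  -- common normal form for both tails
  have htail : ∀ n : ℕ,
      (-1 : ℂ) ^ (-((n : ℤ) + 1)) * ((Real.exp (-2 * ((-((n : ℤ) + 1) : ℤ) : ℝ) ^ 2 * x ^ 2) : ℝ) : ℂ)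
      = -((((-1 : ℝ) ^ n * Real.exp (-2 * ((n : ℝ) + 1) ^ 2 * x ^ 2) : ℝ)) : ℂ) := by
    intro n
    rw [neg_one_zpow_neg]
    have h2 : ((n : ℤ) + 1) = (((n + 1 : ℕ) : ℤ)) := by push_cast; ring
    rw [h2, zpow_natCast]
    have h3 : ((((-(((n + 1 : ℕ) : ℤ))) : ℤ) : ℝ)) ^ 2 = ((n : ℝ) + 1) ^ 2 := by
      push_cast; ring
    rw [show ((-((((n + 1 : ℕ) : ℤ))) : ℤ) : ℝ) ^ 2 = ((n : ℝ) + 1) ^ 2 from h3]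
    rw [pow_succ]
    push_cast
    ring
  have hzero : ∀ n : ℕ,
      (-1 : ℂ) ^ ((n : ℤ)) * ((Real.exp (-2 * ((n : ℤ) : ℝ) ^ 2 * x ^ 2) : ℝ) : ℂ)
      = (-1 : ℂ) ^ n * ((Real.exp (-2 * (n : ℝ) ^ 2 * x ^ 2) : ℝ) : ℂ) := by
    intro n
    rw [zpow_natCast]
    norm_num
  rw [tsum_congr hzero, tsum_congr htail]
  have hsum1 : Summable (fun n : ℕ => (-1 : ℂ) ^ n * ((Real.exp (-2 * (n : ℝ) ^ 2 * x ^ 2) : ℝ) : ℂ)) :=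
    hgnat.congr hzero
  rw [Summable.tsum_eq_zero_add hsum1]
  have h0 : (-1 : ℂ) ^ (0 : ℕ) * ((Real.exp (-2 * ((0 : ℕ) : ℝ) ^ 2 * x ^ 2) : ℝ) : ℂ) = 1 := by
    norm_num
  rw [h0]
  have hstep : ∀ n : ℕ,
      (-1 : ℂ) ^ (n + 1) * ((Real.exp (-2 * (((n : ℕ) + 1 : ℕ) : ℝ) ^ 2 * x ^ 2) : ℝ) : ℂ)
      = -((((-1 : ℝ) ^ n * Real.exp (-2 * ((n : ℝ) + 1) ^ 2 * x ^ 2) : ℝ)) : ℂ) := by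
    intro n
    rw [pow_succ]
    push_cast
    ring
  rw [tsum_congr hstep, tsum_neg, ← Complex.ofReal_tsum]
  rw [show (∑' n : ℕ, ((-1 : ℝ) ^ n * Real.exp (-2 * ((n : ℝ) + 1) ^ 2 * x ^ 2))) = S x from rfl]
  push_cast
  ring

lemma summable_D {x : ℝ} (hx : 0 < x) :
    Summable (fun n : ℤ => Real.exp (-(π ^ 2 / (2 * x ^ 2)) * ((n : ℝ) - 1 / 2) ^ 2)) := by
  have hK : (0 : ℝ) < π ^ 2 / (2 * x ^ 2) := by positivity
  have := summable_int_exp hK (d := -(1 / 2)) (abs_le.mpr ⟨by norm_num, by norm_num⟩)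
  exact this.congr (fun n => by norm_num [sub_eq_add_neg])

lemma dual {x : ℝ} (hx : 0 < x) : 1 - 2 * S x = Real.sqrt (π / 2) / x * D x := by
  have hπ : (0 : ℝ) < π := Real.pi_pos
  have ha : (0 : ℝ) < 2 * x ^ 2 / π := by positivity
  have haC : 0 < (((2 * x ^ 2 / π : ℝ) : ℂ)).re := by rw [Complex.ofReal_re]; exact ha
  have key := Complex.tsum_exp_neg_quadratic haC (Complex.I / 2)
  rw [claimA hx] at key
  have hD : (∑' n : ℤ, Complex.exp (-(π : ℂ) / ((2 * x ^ 2 / π : ℝ) : ℂ)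
      * ((n : ℂ) + Complex.I * (Complex.I / 2)) ^ 2)) = ((D x : ℝ) : ℂ) := by
    simp only [D]
    rw [Complex.ofReal_tsum]
    apply tsum_congr
    intro n
    have hII : Complex.I * (Complex.I / 2) = -(1 / 2 : ℂ) := by
      rw [show Complex.I * (Complex.I / 2) = Complex.I * Complex.I / 2 by ring,
        Complex.I_mul_I]
      ring
    have h2 : -(π : ℂ) / ((2 * x ^ 2 / π : ℝ) : ℂ) * ((n : ℂ) + Complex.I * (Complex.I / 2)) ^ 2
        = ((-(π ^ 2 / (2 * x ^ 2)) * ((n : ℝ) - 1 / 2) ^ 2 : ℝ) : ℂ) := by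
      rw [hII]
      have hx0 : (x : ℂ) ≠ 0 := by exact_mod_cast hx.ne'
      have hπC : (π : ℂ) ≠ 0 := Complex.ofReal_ne_zero.mpr hπ.ne'
      push_cast
      field_simp
      ring
    rw [h2, ← Complex.ofReal_exp]
  rw [hD] at key
  rw [show ((1 : ℂ) / 2) = (((1 : ℝ) / 2 : ℝ) : ℂ) by norm_num] at key
  have hpre : (1 : ℂ) / (((2 * x ^ 2 / π : ℝ) : ℂ)) ^ ((((1 : ℝ) / 2 : ℝ)) : ℂ)
      = (((1 / (2 * x ^ 2 / π) ^ ((1 : ℝ) / 2) : ℝ)) : ℂ) := by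
    rw [← Complex.ofReal_cpow ha.le]
    norm_num
  rw [hpre] at key
  have hreal : 1 - 2 * S x = 1 / (2 * x ^ 2 / π) ^ ((1 : ℝ) / 2) * D x := by
    have : ((1 - 2 * S x : ℝ) : ℂ) = (((1 / (2 * x ^ 2 / π) ^ ((1 : ℝ) / 2) * D x : ℝ)) : ℂ) := by
      rw [key]; push_cast; ring
    exact_mod_cast this
  rw [hreal]
  congr 1
  -- 1 / (2x²/π)^(1/2) = √(π/2)/x
  rw [← Real.sqrt_eq_rpow]
  rw [show 2 * x ^ 2 / π = x ^ 2 * (2 / π) by ring, Real.sqrt_mul (sq_nonneg x),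
    Real.sqrt_sq hx.le]
  rw [show (π / 2 : ℝ) = (2 / π)⁻¹ by rw [inv_div], Real.sqrt_inv]
  have h2π : 0 < Real.sqrt (2 / π) := Real.sqrt_pos.mpr (by positivity)
  field_simp

lemma core_mono {c u v : ℝ} (hu : 2 / π ≤ u) (huv : u ≤ v) (hc : π ^ 2 / 8 ≤ c) :
    v * Real.exp (-(c * v ^ 2)) ≤ u * Real.exp (-(c * u ^ 2)) := by
  have hπ := Real.pi_gt_three
  have hu0 : 0 < u := lt_of_lt_of_le (by positivity) hu
  have hc0 : 0 < c := lt_of_lt_of_le (by positivity) hc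
  have hcu : 1 ≤ 2 * c * u ^ 2 := by
    have h1 : (2 / π) ^ 2 ≤ u ^ 2 := pow_le_pow_left₀ (by positivity) hu 2
    have h2 : (0 : ℝ) < π ^ 2 := by positivity
    have h3 : (2 / π) ^ 2 = 4 / π ^ 2 := by field_simp; ring
    rw [h3] at h1
    have h4 : π ^ 2 / 8 * (4 / π ^ 2) = 1 / 2 := by field_simp; ring
    nlinarith [mul_le_mul hc (le_refl (u^2)) (sq_nonneg u) hc0.le,
      mul_le_mul (le_refl (π ^ 2 / 8)) h1 (by positivity : (0:ℝ) ≤ 4 / π ^ 2) (by positivity)]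
  have hexp : 1 + c * (v ^ 2 - u ^ 2) ≤ Real.exp (c * (v ^ 2 - u ^ 2)) := by
    linarith [Real.add_one_le_exp (c * (v ^ 2 - u ^ 2))]
  have hkey : v ≤ u * Real.exp (c * (v ^ 2 - u ^ 2)) := by
    have h2 : v ≤ u * (1 + c * (v ^ 2 - u ^ 2)) := by
      nlinarith [mul_nonneg (mul_nonneg hc0.le hu0.le) (sq_nonneg (v - u)),
        mul_nonneg (sub_nonneg.mpr hcu) (sub_nonneg.mpr huv)]
    nlinarith [mul_le_mul_of_nonneg_left hexp hu0.le]
  calc v * Real.exp (-(c * v ^ 2))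
      ≤ (u * Real.exp (c * (v ^ 2 - u ^ 2))) * Real.exp (-(c * v ^ 2)) :=
        mul_le_mul_of_nonneg_right hkey (Real.exp_pos _).le
    _ = u * Real.exp (-(c * u ^ 2)) := by
        rw [mul_assoc, ← Real.exp_add]
        congr 2
        ring

lemma term_mono {x y : ℝ} (hx : 0 < x) (hxy : x ≤ y) (hy : y ≤ π / 2) (n : ℤ) :
    Real.sqrt (π / 2) / x * Real.exp (-(π ^ 2 / (2 * x ^ 2)) * ((n : ℝ) - 1 / 2) ^ 2)
      ≤ Real.sqrt (π / 2) / y * Real.exp (-(π ^ 2 / (2 * y ^ 2)) * ((n : ℝ) - 1 / 2) ^ 2) := by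
  have hy0 : 0 < y := lt_of_lt_of_le hx hxy
  have hπ := Real.pi_gt_three
  set w : ℝ := ((n : ℝ) - 1 / 2) ^ 2 with hw
  have hw4 : 1 / 4 ≤ w := by
    rcases le_or_gt (n : ℝ) 0 with h | h
    · rw [hw]; nlinarith
    · have hn : (0 : ℤ) < n := by exact_mod_cast h
      have hn1 : (1 : ℝ) ≤ (n : ℝ) := by exact_mod_cast hn
      rw [hw]; nlinarith
  set c : ℝ := π ^ 2 / 2 * w with hc
  have hcge : π ^ 2 / 8 ≤ c := by
    rw [hc]
    nlinarith [sq_nonneg π, Real.pi_pos]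
  have hu : 2 / π ≤ 1 / y := by
    rw [div_le_div_iff₀ Real.pi_pos hy0]
    linarith
  have huv : 1 / y ≤ 1 / x := one_div_le_one_div_of_le hx hxy
  have h := core_mono hu huv hcge
  have e1 : ∀ z : ℝ, 0 < z → -(c * (1 / z) ^ 2) = -(π ^ 2 / (2 * z ^ 2)) * w := by
    intro z hz
    rw [hc]
    field_simp
    try ring
  rw [e1 x hx, e1 y hy0] at h
  calc Real.sqrt (π / 2) / x * Real.exp (-(π ^ 2 / (2 * x ^ 2)) * w)
      = Real.sqrt (π / 2) * (1 / x * Real.exp (-(π ^ 2 / (2 * x ^ 2)) * w)) := by ring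
    _ ≤ Real.sqrt (π / 2) * (1 / y * Real.exp (-(π ^ 2 / (2 * y ^ 2)) * w)) :=
        mul_le_mul_of_nonneg_left h (Real.sqrt_nonneg _)
    _ = Real.sqrt (π / 2) / y * Real.exp (-(π ^ 2 / (2 * y ^ 2)) * w) := by ring

lemma mono_small {x y : ℝ} (hx : 0 < x) (hxy : x ≤ y) (hy : y ≤ π / 2) :
    ksCDF x ≤ ksCDF y := by
  have hy0 : 0 < y := lt_of_lt_of_le hx hxy
  rw [ksCDF_of_pos hx, ksCDF_of_pos hy0, dual hx, dual hy0]
  simp only [D]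
  rw [← tsum_mul_left, ← tsum_mul_left]
  exact Summable.tsum_le_tsum (fun n => term_mono hx hxy hy n)
    ((summable_D hx).mul_left _) ((summable_D hy0).mul_left _)

lemma ks_nonneg {y : ℝ} (hy : 0 < y) : 0 ≤ ksCDF y := by
  rw [ksCDF_of_pos hy, dual hy]
  have hD : 0 ≤ D y := tsum_nonneg (fun n => (Real.exp_pos _).le)
  exact mul_nonneg (div_nonneg (Real.sqrt_nonneg _) hy.le) hD

lemma pair_anti {a b : ℝ} (ha : 1 ≤ a) (hab : a ≤ b) :
    AntitoneOn (fun s => Real.exp (-a * s) - Real.exp (-b * s)) (Set.Ici (1 : ℝ)) := by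
  have hderiv : ∀ s : ℝ, HasDerivAt (fun s => Real.exp (-a * s) - Real.exp (-b * s))
      (Real.exp (-a * s) * (-a) - Real.exp (-b * s) * (-b)) s := by
    intro s
    have h1 : HasDerivAt (fun t : ℝ => -a * t) (-a) s := by
      simpa using (hasDerivAt_id s).const_mul (-a)
    have h2 : HasDerivAt (fun t : ℝ => -b * t) (-b) s := by
      simpa using (hasDerivAt_id s).const_mul (-b)
    exact (h1.exp).sub (h2.exp)
  apply antitoneOn_of_deriv_nonpos (convex_Ici 1)
  · exact (Continuous.sub (Real.continuous_exp.comp (continuous_const.mul continuous_id))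
      (Real.continuous_exp.comp (continuous_const.mul continuous_id))).continuousOn
  · intro s _
    exact (hderiv s).differentiableAt.differentiableWithinAt
  · intro s hs
    rw [interior_Ici] at hs
    have hs1 : (1 : ℝ) ≤ s := le_of_lt hs
    rw [(hderiv s).deriv]
    have h1 : 1 + (b - a) * s ≤ Real.exp ((b - a) * s) := by
      linarith [Real.add_one_le_exp ((b - a) * s)]
    have h2 : b ≤ a * Real.exp ((b - a) * s) := by
      nlinarith [mul_le_mul_of_nonneg_left h1 (by linarith : (0 : ℝ) ≤ a),
        mul_nonneg (mul_nonneg (by linarith : (0 : ℝ) ≤ a - 1) (sub_nonneg.mpr hab))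
          (by linarith : (0 : ℝ) ≤ s),
        mul_nonneg (sub_nonneg.mpr hab) (by linarith : (0 : ℝ) ≤ s - 1)]
    have h3 : Real.exp ((b - a) * s) * Real.exp (-b * s) = Real.exp (-a * s) := by
      rw [← Real.exp_add]; congr 1; ring
    have h4 := mul_le_mul_of_nonneg_right h2 (Real.exp_pos (-b * s)).le
    rw [mul_assoc, h3] at h4
    linarith

lemma sumE1 {z : ℝ} (hz : 0 < z) :
    Summable (fun k : ℕ => Real.exp (-(2 * (2 * (k : ℝ) + 1) ^ 2) * z ^ 2)) := by
  have hinj : Function.Injective (fun k : ℕ => 2 * k) := fun a b h => by dsimp only at h; omega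
  exact ((summable_exp_nat hz).comp_injective hinj).congr (fun k => by
    show Real.exp (-2 * (((2 * k : ℕ) : ℝ) + 1) ^ 2 * z ^ 2) = _
    congr 1
    push_cast
    ring)

lemma sumE2 {z : ℝ} (hz : 0 < z) :
    Summable (fun k : ℕ => Real.exp (-(2 * (2 * (k : ℝ) + 2) ^ 2) * z ^ 2)) := by
  have hinj : Function.Injective (fun k : ℕ => 2 * k + 1) := fun a b h => by dsimp only at h; omega
  exact ((summable_exp_nat hz).comp_injective hinj).congr (fun k => by
    show Real.exp (-2 * (((2 * k + 1 : ℕ) : ℝ) + 1) ^ 2 * z ^ 2) = _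
    congr 1
    push_cast
    ring)

lemma split_S {z : ℝ} (hz : 0 < z) :
    S z = ∑' k : ℕ, (Real.exp (-(2 * (2 * (k : ℝ) + 1) ^ 2) * z ^ 2)
      - Real.exp (-(2 * (2 * (k : ℝ) + 2) ^ 2) * z ^ 2)) := by
  have hf := summable_S hz
  have hinj2 : Function.Injective (fun k : ℕ => 2 * k) := fun a b h => by dsimp only at h; omega
  have hinj2' : Function.Injective (fun k : ℕ => 2 * k + 1) := fun a b h => by dsimp only at h; omega
  have he := hf.comp_injective hinj2
  have ho := hf.comp_injective hinj2'
  simp only [S]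
  rw [← tsum_even_add_odd he ho]
  have h1 : ∀ k : ℕ, (-1 : ℝ) ^ (2 * k) * Real.exp (-2 * (((2 * k : ℕ) : ℝ) + 1) ^ 2 * z ^ 2)
      = Real.exp (-(2 * (2 * (k : ℝ) + 1) ^ 2) * z ^ 2) := by
    intro k
    have hp : ((-1 : ℝ)) ^ (2 * k) = 1 := by
      rw [pow_mul]; norm_num
    rw [hp, one_mul]
    congr 1
    push_cast
    ring
  have h2 : ∀ k : ℕ, (-1 : ℝ) ^ (2 * k + 1) * Real.exp (-2 * (((2 * k + 1 : ℕ) : ℝ) + 1) ^ 2 * z ^ 2)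
      = -Real.exp (-(2 * (2 * (k : ℝ) + 2) ^ 2) * z ^ 2) := by
    intro k
    have hp : ((-1 : ℝ)) ^ (2 * k + 1) = -1 := by
      rw [pow_succ, pow_mul]; norm_num
    rw [hp]
    push_cast
    have : -2 * ((2 * (k : ℝ) + 1) + 1) ^ 2 * z ^ 2 = -(2 * (2 * (k : ℝ) + 2) ^ 2) * z ^ 2 := by
      ring
    rw [this]
    ring
  rw [tsum_congr h1, tsum_congr h2, tsum_neg, ← sub_eq_add_neg,
    ← Summable.tsum_sub (sumE1 hz) (sumE2 hz)]

lemma pair_le {k : ℕ} {x y : ℝ} (hx : 1 ≤ x) (hxy : x ≤ y) :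
    Real.exp (-(2 * (2 * (k : ℝ) + 1) ^ 2) * y ^ 2) - Real.exp (-(2 * (2 * (k : ℝ) + 2) ^ 2) * y ^ 2)
      ≤ Real.exp (-(2 * (2 * (k : ℝ) + 1) ^ 2) * x ^ 2)
        - Real.exp (-(2 * (2 * (k : ℝ) + 2) ^ 2) * x ^ 2) := by
  have hk : (0 : ℝ) ≤ (k : ℝ) := Nat.cast_nonneg k
  have ha : (1 : ℝ) ≤ 2 * (2 * (k : ℝ) + 1) ^ 2 := by nlinarith
  have hab : 2 * (2 * (k : ℝ) + 1) ^ 2 ≤ 2 * (2 * (k : ℝ) + 2) ^ 2 := by nlinarith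
  have hx0 : 0 < x := lt_of_lt_of_le one_pos hx
  have h1 : (1 : ℝ) ≤ x ^ 2 := by nlinarith
  have h2 : x ^ 2 ≤ y ^ 2 := by nlinarith
  exact pair_anti ha hab (Set.mem_Ici.mpr h1) (Set.mem_Ici.mpr (le_trans h1 h2)) h2

lemma mono_big {x y : ℝ} (hx : 1 ≤ x) (hxy : x ≤ y) : ksCDF x ≤ ksCDF y := by
  have hx0 : 0 < x := lt_of_lt_of_le one_pos hx
  have hy0 : 0 < y := lt_of_lt_of_le hx0 hxy
  rw [ksCDF_of_pos hx0, ksCDF_of_pos hy0]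
  have key : S y ≤ S x := by
    rw [split_S hx0, split_S hy0]
    exact Summable.tsum_le_tsum (fun k => pair_le hx hxy)
      ((sumE1 hy0).sub (sumE2 hy0)) ((sumE1 hx0).sub (sumE2 hx0))
  linarith

lemma tendsto_one : Filter.Tendsto ksCDF Filter.atTop (nhds 1) := by
  have h0 : Filter.Tendsto (fun x : ℝ => ksCDF x - 1) Filter.atTop (nhds 0) := by
    apply squeeze_zero_norm' (a := fun x : ℝ => 2 * ((1 - Real.exp (-2))⁻¹ * Real.exp (-x)))
    · filter_upwards [Filter.eventually_ge_atTop (1 : ℝ)] with x hx1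
      have hx0 : 0 < x := lt_of_lt_of_le one_pos hx1
      rw [ksCDF_of_pos hx0]
      have habs : ‖(1 : ℝ) - 2 * S x - 1‖ = 2 * |S x| := by
        rw [Real.norm_eq_abs, show (1 : ℝ) - 2 * S x - 1 = -(2 * S x) by ring, abs_neg, abs_mul]
        norm_num
      rw [habs]
      have hr0 : (0 : ℝ) < Real.exp (-(2 * x ^ 2)) := Real.exp_pos _
      have hr2 : Real.exp (-(2 * x ^ 2)) ≤ Real.exp (-2) := by
        apply Real.exp_le_exp.mpr; nlinarith
      have hr3 : Real.exp (-2) < 1 := by rw [Real.exp_lt_one_iff]; norm_num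
      have hS1 : |S x| ≤ ∑' i : ℕ, Real.exp (-2 * ((i : ℝ) + 1) ^ 2 * x ^ 2) := by
        simp only [S]
        rw [← Real.norm_eq_abs]
        calc ‖∑' i : ℕ, (-1 : ℝ) ^ i * Real.exp (-2 * ((i : ℝ) + 1) ^ 2 * x ^ 2)‖
            ≤ ∑' i : ℕ, ‖(-1 : ℝ) ^ i * Real.exp (-2 * ((i : ℝ) + 1) ^ 2 * x ^ 2)‖ :=
              norm_tsum_le_tsum_norm ((summable_exp_nat hx0).congr
                (fun i => (abs_term x i).symm))
          _ = ∑' i : ℕ, Real.exp (-2 * ((i : ℝ) + 1) ^ 2 * x ^ 2) := tsum_congr (abs_term x)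
      have hS2 : (∑' i : ℕ, Real.exp (-2 * ((i : ℝ) + 1) ^ 2 * x ^ 2))
          ≤ ∑' i : ℕ, Real.exp (-(2 * x ^ 2)) ^ i * Real.exp (-(2 * x ^ 2)) :=
        Summable.tsum_le_tsum (fun i => term_le_geo i) (summable_exp_nat hx0)
          ((summable_geometric_of_lt_one hr0.le (lt_of_le_of_lt hr2 hr3)).mul_right _)
      have hS3 : (∑' i : ℕ, Real.exp (-(2 * x ^ 2)) ^ i * Real.exp (-(2 * x ^ 2)))
          = (1 - Real.exp (-(2 * x ^ 2)))⁻¹ * Real.exp (-(2 * x ^ 2)) := by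
        rw [tsum_mul_right, tsum_geometric_of_lt_one hr0.le (lt_of_le_of_lt hr2 hr3)]
      have hinv : (1 - Real.exp (-(2 * x ^ 2)))⁻¹ ≤ (1 - Real.exp (-2))⁻¹ := by
        apply inv_anti₀ (by linarith)
        linarith
      have hrx : Real.exp (-(2 * x ^ 2)) ≤ Real.exp (-x) := by
        apply Real.exp_le_exp.mpr; nlinarith
      have hS4 : |S x| ≤ (1 - Real.exp (-2))⁻¹ * Real.exp (-x) := by
        calc |S x| ≤ (1 - Real.exp (-(2 * x ^ 2)))⁻¹ * Real.exp (-(2 * x ^ 2)) := by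
              rw [← hS3]; exact le_trans hS1 hS2
          _ ≤ (1 - Real.exp (-2))⁻¹ * Real.exp (-x) := by
              apply mul_le_mul hinv hrx hr0.le
              exact inv_nonneg.mpr (by linarith)
      linarith
    · have h1 : Filter.Tendsto (fun x : ℝ => Real.exp (-x)) Filter.atTop (nhds 0) := by
        simpa using Real.tendsto_exp_neg_atTop_nhds_zero
      have h2 := (h1.const_mul ((1 - Real.exp (-2))⁻¹)).const_mul (2 : ℝ)
      simpa using h2
  have := h0.add_const 1
  simp only [sub_add_cancel, zero_add] at this
  exact this

end KSProof

theorem stmt_3 :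
    (MonotoneOn ksCDF (Set.Ici (0 : ℝ))) ∧ ksCDF 0 = 0 ∧
      Filter.Tendsto ksCDF Filter.atTop (nhds 1) := by
  refine ⟨?_, by simp [ksCDF], KSProof.tendsto_one⟩
  intro x hx y hy hxy
  rcases eq_or_lt_of_le (Set.mem_Ici.mp hx) with h0 | hx0
  · rw [KSProof.ksCDF_of_nonpos (le_of_eq h0.symm)]
    rcases eq_or_lt_of_le (Set.mem_Ici.mp hy) with h1 | hy0
    · rw [KSProof.ksCDF_of_nonpos (le_of_eq h1.symm)]
    · exact KSProof.ks_nonneg hy0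
  · have hpi : (1 : ℝ) ≤ π / 2 := by nlinarith [Real.pi_gt_three]
    rcases le_or_gt y (π / 2) with hy2 | hy2
    · exact KSProof.mono_small hx0 hxy hy2
    · rcases le_or_gt 1 x with hx1 | hx1
      · exact KSProof.mono_big hx1 hxy
      · exact le_trans (KSProof.mono_small hx0 hx1.le hpi)
          (KSProof.mono_big le_rfl (by linarith))
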